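/- arXiv:2305.00130 — 10 statements merged into one kernel-verified Lean document; each statement's English description precedes it below -/
import Mathlib

section
/- Let A be a tetravalent modal algebra. Then for all a, b in A the following identities hold: (i) ¬□a ⊔ a = 1; (ii) □□a = □a; (iii) □a ⊔ ¬a = a ⊔ ¬a; (iv) □(a ⊓ b) = □a ⊓ □b; (v) □a ⊔ ¬□a = 1; (vi) □(a ⊔ □b) = □a ⊔ □b; (vii) □a ⊓ ¬□a = 0. -/
/-- A tetravalent modal algebra (TMA): a bounded distributive lattice with a
De Morgan negation `neg` and a modal operator `box` satisfying
`□a ⊓ ¬a = 0` and `¬□a ⊓ a = ¬a ⊓ a`. -/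
class TMA (A : Type*) extends DistribLattice A, BoundedOrder A where
  neg : A → A
  box : A → A
  neg_neg : ∀ a : A, neg (neg a) = a
  neg_sup : ∀ a b : A, neg (a ⊔ b) = neg a ⊓ neg b
  box_inf_neg : ∀ a : A, box a ⊓ neg a = ⊥
  neg_box_inf : ∀ a : A, neg (box a) ⊓ a = neg a ⊓ a

namespace TMAaux

open TMA

variable {A : Type*} [TMA A]

lemma neg_inf (a b : A) : neg (a ⊓ b) = neg a ⊔ neg b := by
  have h := TMA.neg_sup (neg a) (neg b)
  rw [TMA.neg_neg, TMA.neg_neg] at h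
  rw [← h, TMA.neg_neg]

lemma neg_top : (neg ⊤ : A) = ⊥ := by
  have h := TMA.neg_sup (neg (⊥ : A)) ⊤
  rw [sup_top_eq, TMA.neg_neg] at h
  rw [h]; exact bot_inf_eq _

lemma neg_bot : (neg ⊥ : A) = ⊤ := by
  rw [← neg_top, TMA.neg_neg]

/-- (i) -/
lemma one (a : A) : neg (box a) ⊔ a = ⊤ := by
  have h := congrArg neg (box_inf_neg a)
  rwa [neg_inf, TMA.neg_neg, neg_bot] at h

/-- (iii) -/
lemma three (a : A) : box a ⊔ neg a = a ⊔ neg a := by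
  have h := congrArg neg (neg_box_inf a)
  rwa [neg_inf, neg_inf, TMA.neg_neg, TMA.neg_neg] at h

lemma box_le (a : A) : box a ≤ a := by
  have h1 : box a ≤ a ⊔ neg a := by
    rw [← three a]; exact le_sup_left
  have h2 : box a = box a ⊓ a := by
    calc box a = box a ⊓ (a ⊔ neg a) := (inf_eq_left.mpr h1).symm
    _ = (box a ⊓ a) ⊔ (box a ⊓ neg a) := inf_sup_left _ _ _
    _ = (box a ⊓ a) ⊔ ⊥ := by rw [box_inf_neg]
    _ = box a ⊓ a := sup_bot_eq _
  rw [h2]; exact inf_le_right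

/-- (vii) -/
lemma seven (a : A) : box a ⊓ neg (box a) = ⊥ := by
  calc box a ⊓ neg (box a) = (box a ⊓ a) ⊓ neg (box a) := by
        rw [inf_eq_left.mpr (box_le a)]
  _ = box a ⊓ (neg (box a) ⊓ a) := by ac_rfl
  _ = box a ⊓ (neg a ⊓ a) := by rw [neg_box_inf]
  _ = (box a ⊓ neg a) ⊓ a := by ac_rfl
  _ = ⊥ ⊓ a := by rw [box_inf_neg]
  _ = ⊥ := bot_inf_eq _

/-- (v) -/
lemma five (a : A) : box a ⊔ neg (box a) = ⊤ := by
  have h := congrArg neg (seven a)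
  rwa [neg_inf, TMA.neg_neg, neg_bot, sup_comm] at h

/-- (ii) -/
lemma two (a : A) : box (box a) = box a := by
  refine le_antisymm (box_le _) ?_
  have h1 : box (box a) ⊔ neg (box a) = ⊤ := by
    rw [three (box a), five a]
  calc box a = box a ⊓ (box (box a) ⊔ neg (box a)) := by rw [h1, inf_top_eq]
  _ = (box a ⊓ box (box a)) ⊔ (box a ⊓ neg (box a)) := inf_sup_left _ _ _
  _ = (box a ⊓ box (box a)) ⊔ ⊥ := by rw [seven]
  _ = box a ⊓ box (box a) := sup_bot_eq _
  _ ≤ box (box a) := inf_le_right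

/-- uniqueness of the modal operator -/
lemma box_unique {c y : A} (h1 : y ⊓ neg c = ⊥) (h2 : neg y ⊓ c = neg c ⊓ c) :
    y = box c := by
  apply eq_of_inf_eq_sup_eq (a := neg c)
  · rw [h1, box_inf_neg]
  · have hy : y ⊔ neg c = c ⊔ neg c := by
      have h := congrArg neg h2
      rwa [neg_inf, neg_inf, TMA.neg_neg, TMA.neg_neg] at h
    rw [hy, three]

/-- (iv) -/
lemma four (a b : A) : box (a ⊓ b) = box a ⊓ box b := by
  refine (box_unique ?_ ?_).symm
  · calc box a ⊓ box b ⊓ neg (a ⊓ b) = box a ⊓ box b ⊓ (neg a ⊔ neg b) := by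
          rw [neg_inf]
    _ = (box b ⊓ (box a ⊓ neg a)) ⊔ (box a ⊓ (box b ⊓ neg b)) := by
          rw [inf_sup_left]; ac_rfl
    _ = ⊥ := by rw [box_inf_neg, box_inf_neg, inf_bot_eq, inf_bot_eq, sup_bot_eq]
  · calc neg (box a ⊓ box b) ⊓ (a ⊓ b)
        = (neg (box a) ⊔ neg (box b)) ⊓ (a ⊓ b) := by rw [neg_inf]
    _ = (b ⊓ (neg (box a) ⊓ a)) ⊔ (a ⊓ (neg (box b) ⊓ b)) := by
          rw [inf_comm _ (a ⊓ b), inf_sup_left]; ac_rfl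
    _ = (b ⊓ (neg a ⊓ a)) ⊔ (a ⊓ (neg b ⊓ b)) := by
          rw [neg_box_inf, neg_box_inf]
    _ = (a ⊓ b) ⊓ (neg a ⊔ neg b) := by rw [inf_sup_left]; ac_rfl
    _ = neg (a ⊓ b) ⊓ (a ⊓ b) := by rw [neg_inf, inf_comm]

/-- (vi) -/
lemma six (a b : A) : box (a ⊔ box b) = box a ⊔ box b := by
  refine (box_unique ?_ ?_).symm
  · calc (box a ⊔ box b) ⊓ neg (a ⊔ box b)
        = (box a ⊔ box b) ⊓ (neg a ⊓ neg (box b)) := by rw [TMA.neg_sup]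
    _ = (neg (box b) ⊓ (box a ⊓ neg a)) ⊔ (neg a ⊓ (box b ⊓ neg (box b))) := by
          rw [inf_comm _ (neg a ⊓ neg (box b)), inf_sup_left]; ac_rfl
    _ = ⊥ := by rw [box_inf_neg, seven, inf_bot_eq, inf_bot_eq, sup_bot_eq]
  · calc neg (box a ⊔ box b) ⊓ (a ⊔ box b)
        = (neg (box a) ⊓ neg (box b)) ⊓ (a ⊔ box b) := by rw [TMA.neg_sup]
    _ = (neg (box b) ⊓ (neg (box a) ⊓ a)) ⊔
          (neg (box a) ⊓ (box b ⊓ neg (box b))) := by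
          rw [inf_sup_left]; ac_rfl
    _ = neg (box b) ⊓ (neg a ⊓ a) := by
          rw [neg_box_inf, seven, inf_bot_eq, sup_bot_eq]
    _ = neg (a ⊔ box b) ⊓ (a ⊔ box b) := by
          have h7 : (neg a ⊓ neg (box b)) ⊓ box b = ⊥ := by
            rw [inf_assoc, inf_comm (neg (box b)) (box b), seven, inf_bot_eq]
          rw [TMA.neg_sup, inf_sup_left, h7, sup_bot_eq]
          ac_rfl

end TMAaux

/-- Lemma 2.1 (i)-(vii): identities valid in every tetravalent modal algebra. -/
theorem stmt0 {A : Type*} [TMA A] (a b : A) :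
    TMA.neg (TMA.box a) ⊔ a = ⊤ ∧
    TMA.box (TMA.box a) = TMA.box a ∧
    TMA.box a ⊔ TMA.neg a = a ⊔ TMA.neg a ∧
    TMA.box (a ⊓ b) = TMA.box a ⊓ TMA.box b ∧
    TMA.box a ⊔ TMA.neg (TMA.box a) = ⊤ ∧
    TMA.box (a ⊔ TMA.box b) = TMA.box a ⊔ TMA.box b ∧
    TMA.box a ⊓ TMA.neg (TMA.box a) = ⊥ := by
  exact ⟨TMAaux.one a, TMAaux.two a, TMAaux.three a, TMAaux.four a b,
    TMAaux.five a, TMAaux.six a b, TMAaux.seven a⟩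
end

section
/- In every tetravalent modal algebra A, for every a in A, □(a ⊔ ¬□a) = 1. -/
lemma TMA.neg_top {A : Type*} [TMA A] : TMA.neg (⊤ : A) = ⊥ := by
  have h : TMA.neg (⊤ : A) ≤ TMA.neg (TMA.neg (⊥ : A)) := by
    have := TMA.neg_sup (⊤ : A) (TMA.neg (⊥ : A))
    rw [top_sup_eq] at this
    rw [this]; exact inf_le_right
  rw [TMA.neg_neg] at h
  exact le_bot_iff.mp h

lemma TMA.neg_bot {A : Type*} [TMA A] : TMA.neg (⊥ : A) = ⊤ := by
  have := TMA.neg_neg (⊤ : A)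
  rw [TMA.neg_top] at this
  exact this

lemma TMA.box_top {A : Type*} [TMA A] : TMA.box (⊤ : A) = ⊤ := by
  have h := TMA.neg_box_inf (⊤ : A)
  rw [inf_top_eq, inf_top_eq, TMA.neg_top] at h
  have := TMA.neg_neg (TMA.box (⊤ : A))
  rw [h, TMA.neg_bot] at this
  exact this.symm

/-- In every tetravalent modal algebra, `□(a ⊔ ¬□a) = 1`. -/
theorem stmt2 {A : Type*} [TMA A] (a : A) :
    TMA.box (a ⊔ TMA.neg (TMA.box a)) = ⊤ := by
  have h : TMA.neg (a ⊔ TMA.neg (TMA.box a)) = ⊥ := by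
    rw [TMA.neg_sup, TMA.neg_neg, inf_comm, TMA.box_inf_neg]
  have h2 : a ⊔ TMA.neg (TMA.box a) = ⊤ := by
    have := TMA.neg_neg (a ⊔ TMA.neg (TMA.box a))
    rw [h, TMA.neg_bot] at this
    exact this.symm
  rw [h2, TMA.box_top]
end

section
/- For every finite set Γ ∪ {α} of formulas, the following are equivalent: (1) for every tetravalent modal algebra A and every valuation w of the propositional variables in A, the meet of {w(γ) : γ ∈ Γ} is ≤ w(α) (the meet being 1 when Γ is empty); (2) for every valuation v into M4m, if v(γ) ∈ {b, 1} for all γ ∈ Γ, then v(α) ∈ {b, 1}. That is, the degree-preserving logic TML is determined by the single matrix ⟨M4m, {b, 1}⟩. -/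
/-- The four-element algebra `M4m`, realized on `Bool × Bool` (componentwise lattice
order), with `0 = (false,false)`, `n = (true,false)`, `b = (false,true)`,
`1 = (true,true)`; `n` and `b` are incomparable, `n ⊓ b = 0`, `n ⊔ b = 1`. -/
abbrev M4 : Type := Bool × Bool
def M4.zero : M4 := (false, false)
def M4.n : M4 := (true, false)
def M4.b : M4 := (false, true)
def M4.one : M4 := (true, true)

/-- `M4m` as a tetravalent modal algebra: `¬0 = 1`, `¬1 = 0`, `¬n = n`, `¬b = b`,
`□1 = 1` and `□0 = □n = □b = 0`. -/
instance : TMA M4 :=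
  { (inferInstance : DistribLattice M4), (inferInstance : BoundedOrder M4) with
    neg := fun p => (!p.2, !p.1)
    box := fun p => if p = M4.one then M4.one else M4.zero
    neg_neg := by decide
    neg_sup := by decide
    box_inf_neg := by decide
    neg_box_inf := by decide }

/-- Formulas of the tetravalent modal logic TML, in the language `∧, ∨, ¬, □, ⊥`,
over a countable set of propositional variables. -/
inductive Fm : Type
  | var : ℕ → Fm
  | bot : Fm
  | and : Fm → Fm → Fm
  | or : Fm → Fm → Fm
  | not : Fm → Fm
  | box : Fm → Fm

/-- The homomorphic extension of a valuation `v` of the propositional variables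
in a TMA `A` to all formulas. -/
def Fm.val {A : Type*} [TMA A] (v : ℕ → A) : Fm → A
  | .var p => v p
  | .bot => ⊥
  | .and α β => Fm.val v α ⊓ Fm.val v β
  | .or α β => Fm.val v α ⊔ Fm.val v β
  | .not α => TMA.neg (Fm.val v α)
  | .box α => TMA.box (Fm.val v α)

open Order

namespace Order.Ideal

variable {P : Type*}

theorem IsPrime.inf_mem_iff [SemilatticeInf P] {I : Ideal P} (hI : I.IsPrime) {x y : P} :
    x ⊓ y ∈ I ↔ x ∈ I ∨ y ∈ I :=
  ⟨hI.mem_or_mem, fun h => h.elim (I.lower inf_le_left) (I.lower inf_le_right)⟩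

theorem IsPrime.mem_iff_notMem_of_isCompl [Lattice P] [BoundedOrder P] {I : Ideal P}
    (hI : I.IsPrime) {x y : P} (h : IsCompl x y) : y ∈ I ↔ x ∉ I := by
  refine ⟨fun hy hx => hI.top_notMem ?_, fun hx => (hI.mem_or_mem ?_).resolve_left hx⟩
  · simpa only [h.sup_eq_top] using sup_mem hx hy
  · simpa only [h.inf_eq_bot] using I.bot_mem

theorem exists_isPrime_mem_notMem_of_not_le [DistribLattice P] {a b : P} (h : ¬a ≤ b) :
    ∃ J : Ideal P, J.IsPrime ∧ b ∈ J ∧ a ∉ J := by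
  have hdisj : Disjoint (PFilter.principal a : Set P) (principal b : Set P) :=
    Set.disjoint_left.mpr fun _ hax hxb => h (le_trans hax hxb)
  obtain ⟨J, hJ, hbJ, haJ⟩ := DistribLattice.prime_ideal_of_disjoint_filter_ideal hdisj
  exact ⟨J, hJ, hbJ mem_principal_self, Set.disjoint_left.mp haJ (PFilter.mem_principal.mpr le_rfl)⟩

end Order.Ideal

namespace TMA

variable {A : Type*} [TMA A]

theorem neg_inf (a b : A) : neg (a ⊓ b) = neg a ⊔ neg b := by
  conv_lhs => rw [← TMA.neg_neg a, ← TMA.neg_neg b, ← neg_sup, TMA.neg_neg]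

theorem neg_top_s4 : neg (⊤ : A) = ⊥ := by
  rw [← top_sup_eq (neg ⊥), neg_sup, TMA.neg_neg, inf_bot_eq]

theorem neg_bot_s4 : neg (⊥ : A) = ⊤ := by
  rw [← neg_top_s4, TMA.neg_neg]

theorem box_sup_neg (a : A) : box a ⊔ neg a = a ⊔ neg a := by
  simpa only [neg_inf, TMA.neg_neg] using congrArg neg (neg_box_inf a)

theorem box_le (a : A) : box a ≤ a :=
  calc box a = box a ⊓ (a ⊔ neg a) := by rw [← box_sup_neg, inf_sup_self]
    _ = box a ⊓ a := by rw [inf_sup_left, box_inf_neg, sup_bot_eq]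
    _ ≤ a := inf_le_right

theorem box_inf_neg_box (a : A) : box a ⊓ neg (box a) = ⊥ :=
  le_bot_iff.mp <|
    calc box a ⊓ neg (box a) = box a ⊓ (neg (box a) ⊓ a) := by
          rw [inf_comm (neg _), ← inf_assoc, inf_eq_left.mpr (box_le a)]
      _ = box a ⊓ (neg a ⊓ a) := by rw [neg_box_inf]
      _ ≤ box a ⊓ neg a := inf_le_inf_left _ inf_le_left
      _ = ⊥ := box_inf_neg a

theorem isCompl_box_neg_box (a : A) : IsCompl (box a) (neg (box a)) := by
  refine .of_eq (box_inf_neg_box a) ?_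
  simpa only [neg_inf, TMA.neg_neg, neg_bot_s4, sup_comm] using congrArg neg (box_inf_neg_box a)

structure IsHom {B : Type*} [TMA B] (f : A → B) : Prop where
  map_bot : f ⊥ = ⊥
  map_inf : ∀ a b, f (a ⊓ b) = f a ⊓ f b
  map_sup : ∀ a b, f (a ⊔ b) = f a ⊔ f b
  map_neg : ∀ a, f (neg a) = neg (f a)
  map_box : ∀ a, f (box a) = box (f a)

end TMA

theorem Fm.val_comp {A B : Type*} [TMA A] [TMA B] {f : A → B} (hf : TMA.IsHom f)
    (w : ℕ → A) (φ : Fm) : Fm.val (f ∘ w) φ = f (Fm.val w φ) := by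
  induction φ with
  | var p => rfl
  | bot => exact hf.map_bot.symm
  | and φ ψ ihφ ihψ => rw [Fm.val, Fm.val, ihφ, ihψ, hf.map_inf]
  | or φ ψ ihφ ihψ => rw [Fm.val, Fm.val, ihφ, ihψ, hf.map_sup]
  | not φ ih => rw [Fm.val, Fm.val, ih, hf.map_neg]
  | box φ ih => rw [Fm.val, Fm.val, ih, hf.map_box]

theorem M4.eq_b_or_eq_one_iff (x : M4) : x = M4.b ∨ x = M4.one ↔ M4.b ≤ x := by
  revert x; decide

theorem M4.bot_eq : (⊥ : M4) = (false, false) := rfl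

@[simp]
theorem M4.neg_mk (p q : Bool) : TMA.neg ((p, q) : M4) = (!q, !p) := rfl

@[simp]
theorem M4.box_mk (p q : Bool) : TMA.box ((p, q) : M4) = (p && q, p && q) := by
  revert p q; decide

namespace TMA

variable {A : Type*} [TMA A] {J : Ideal A}

theorem notMem_box_iff (hJ : J.IsPrime) (a : A) : box a ∉ J ↔ neg a ∈ J ∧ a ∉ J := by
  refine ⟨fun h => ⟨?_, fun ha => h (J.lower (box_le a) ha)⟩, fun ⟨hna, ha⟩ hb => ha ?_⟩
  · refine (hJ.mem_or_mem ?_).resolve_left h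
    simpa only [box_inf_neg] using J.bot_mem
  · have hsup := J.sup_mem hb hna
    rw [box_sup_neg] at hsup
    exact J.lower le_sup_left hsup

def charM4 (J : Ideal A) [DecidablePred (· ∈ J)] (a : A) : M4 :=
  (decide (neg a ∈ J), decide (a ∉ J))

variable [DecidablePred (· ∈ J)]

theorem b_le_charM4_iff (a : A) : M4.b ≤ charM4 J a ↔ a ∉ J := by
  by_cases ha : a ∈ J <;> simp [charM4, M4.b, ha]

theorem isHom_charM4 (hJ : J.IsPrime) : IsHom (charM4 J) where
  map_bot := by
    simp [charM4, neg_bot_s4, J.bot_mem, hJ.top_notMem, M4.bot_eq]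
  map_inf a b := by
    simp [charM4, neg_inf, Ideal.sup_mem_iff, hJ.inf_mem_iff]
  map_sup a b := by
    simp [charM4, neg_sup, Ideal.sup_mem_iff, hJ.inf_mem_iff]
  map_neg a := by
    simp [charM4, TMA.neg_neg]
  map_box a := by
    simp [charM4, hJ.mem_iff_notMem_of_isCompl (isCompl_box_neg_box a), notMem_box_iff hJ]

end TMA

/-- The degree-preserving logic TML is determined by the single matrix
`⟨M4m, {b,1}⟩`: for a finite set `Γ ∪ {α}` of formulas, the meet of the values of
`Γ` is below the value of `α` under every valuation into every TMA iff every
valuation into `M4m` sending all of `Γ` into `{b,1}` sends `α` into `{b,1}`. -/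
theorem stmt4 (Γ : Finset Fm) (α : Fm) :
    (∀ (A : Type) [TMA A] (w : ℕ → A), Γ.inf (Fm.val w) ≤ Fm.val w α) ↔
    (∀ v : ℕ → M4, (∀ γ ∈ Γ, Fm.val v γ = M4.b ∨ Fm.val v γ = M4.one) →
      (Fm.val v α = M4.b ∨ Fm.val v α = M4.one)) := by
  simp only [M4.eq_b_or_eq_one_iff]
  refine ⟨fun h v hv => (Finset.le_inf hv).trans (h M4 v), fun h A _ w => ?_⟩
  classical
  by_contra hle
  obtain ⟨J, hJ, hαJ, hΓJ⟩ := Ideal.exists_isPrime_mem_notMem_of_not_le hle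
  have hval := Fm.val_comp (TMA.isHom_charM4 hJ) w
  have hΓ (γ : Fm) (hγ : γ ∈ Γ) : M4.b ≤ Fm.val (TMA.charM4 J ∘ w) γ := by
    rw [hval, TMA.b_le_charM4_iff]
    exact fun hγJ => hΓJ (J.lower (Finset.inf_le hγ) hγJ)
  have hα := h _ hΓ
  rw [hval, TMA.b_le_charM4_iff] at hα
  exact hα hαJ
end

section
/- In every tetravalent modal algebra A, with the contrapositive implication ≻, the following identities hold for all x, y in A: (i) 1 = 0 ≻ 0; (ii) ¬x = x ≻ 0; (iii) x ⊔ y = (x ≻ y) ≻ y; (iv) x ⊓ y = ¬(¬x ⊔ ¬y); (v) □x = ¬(x ≻ ¬x). Hence ≻ and 0 generate all the operations of a TMA. -/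
namespace TMA
variable {A : Type*} [TMA A]
/-- Loureiro's implication `x → y := ¬□x ⊔ y`. -/
def arrow (x y : A) : A := neg (box x) ⊔ y
/-- The contrapositive implication
`x ≻ y := (x → y) ⊓ (¬y → ¬x) ⊓ ((¬x ⊔ y) → (□¬x ⊔ y))`. -/
def cimp (x y : A) : A :=
  arrow x y ⊓ arrow (neg y) (neg x) ⊓ arrow (neg x ⊔ y) (box (neg x) ⊔ y)
/-- The possibility operator `◇x := ¬□¬x`. -/
def dia (x : A) : A := neg (box (neg x))
end TMA

namespace TMAP
open TMA
variable {A : Type*} [TMA A] {a b f g z t : A}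

lemma neg_le_neg (h : a ≤ b) : neg b ≤ neg a := by
  have h2 : neg (a ⊔ b) = neg a ⊓ neg b := TMA.neg_sup a b
  rw [sup_eq_right.mpr h] at h2
  rw [h2]; exact inf_le_left

lemma neg_bot : neg (⊥ : A) = ⊤ := by
  apply top_unique
  have := neg_le_neg (bot_le : (⊥:A) ≤ neg ⊤)
  rwa [TMA.neg_neg] at this

lemma neg_top : neg (⊤ : A) = ⊥ := by rw [← neg_bot, TMA.neg_neg]

lemma neg_inf (a b : A) : neg (a ⊓ b) = neg a ⊔ neg b := by
  have : a ⊓ b = neg (neg a ⊔ neg b) := by rw [TMA.neg_sup, TMA.neg_neg, TMA.neg_neg]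
  rw [this, TMA.neg_neg]

lemma le_of_neg_le (h : neg a ≤ neg b) : b ≤ a := by
  have := neg_le_neg h; rwa [TMA.neg_neg, TMA.neg_neg] at this

-- ¬□a ⊔ a = ⊤
lemma P (a : A) : neg (box a) ⊔ a = ⊤ := by
  have := congrArg neg (box_inf_neg a)
  rwa [neg_inf, TMA.neg_neg, neg_bot] at this

-- □a ⊔ ¬a = a ⊔ ¬a
lemma Nx (a : A) : box a ⊔ neg a = a ⊔ neg a := by
  have := congrArg neg (neg_box_inf a)
  rwa [neg_inf, neg_inf, TMA.neg_neg, TMA.neg_neg] at this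

lemma box_le (a : A) : box a ≤ a := by
  apply le_of_neg_le
  calc neg a = neg a ⊓ (neg (box a) ⊔ a) := by rw [P, inf_top_eq]
    _ = (neg a ⊓ neg (box a)) ⊔ (neg a ⊓ a) := inf_sup_left _ _ _
    _ = (neg a ⊓ neg (box a)) ⊔ (neg (box a) ⊓ a) := by rw [inf_comm (neg a) a, neg_box_inf a, inf_comm a (neg a)]
    _ ≤ neg (box a) := sup_le inf_le_right inf_le_left

-- L : a = □a ⊔ (a ⊓ ¬a)
lemma Lx (a : A) : box a ⊔ (a ⊓ neg a) = a := by
  have h1 : a ⊓ box a = box a := inf_eq_right.mpr (box_le a)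
  calc box a ⊔ (a ⊓ neg a) = (a ⊓ box a) ⊔ (a ⊓ neg a) := by rw [h1]
    _ = a ⊓ (box a ⊔ neg a) := (inf_sup_left _ _ _).symm
    _ = a ⊓ (a ⊔ neg a) := by rw [Nx]
    _ = a := inf_sup_self

lemma boxB1 (a : A) : box a ⊓ neg (box a) = ⊥ := by
  have h1 : box a ⊓ a = box a := inf_eq_left.mpr (box_le a)
  calc box a ⊓ neg (box a) = (box a ⊓ a) ⊓ neg (box a) := by rw [h1]
    _ = box a ⊓ (neg (box a) ⊓ a) := by rw [inf_assoc, inf_comm a]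
    _ = box a ⊓ (neg a ⊓ a) := by rw [neg_box_inf]
    _ = (box a ⊓ neg a) ⊓ a := by rw [inf_assoc]
    _ = ⊥ := by rw [box_inf_neg, bot_inf_eq]

lemma boxB2 (a : A) : box a ⊔ neg (box a) = ⊤ := by
  have := congrArg neg (boxB1 a)
  rw [neg_inf, TMA.neg_neg, neg_bot] at this
  rwa [sup_comm] at this

def IsB (f : A) : Prop := f ⊓ neg f = ⊥ ∧ f ⊔ neg f = ⊤

lemma isB_box (a : A) : IsB (box a) := ⟨boxB1 a, boxB2 a⟩

lemma isB_neg (hf : IsB f) : IsB (neg f) := by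
  constructor
  · rw [TMA.neg_neg, inf_comm]; exact hf.1
  · rw [TMA.neg_neg, sup_comm]; exact hf.2

lemma isB_top : IsB (⊤ : A) := by constructor <;> simp [neg_top]
lemma isB_bot : IsB (⊥ : A) := by constructor <;> simp [neg_bot]

lemma isB_inf (hf : IsB f) (hg : IsB g) : IsB (f ⊓ g) := by
  constructor
  · apply le_antisymm _ bot_le
    rw [neg_inf, inf_sup_left]
    apply sup_le
    · exact le_of_le_of_eq (inf_le_inf_right _ inf_le_left) hf.1
    · exact le_of_le_of_eq (inf_le_inf_right _ inf_le_right) hg.1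
  · apply le_antisymm le_top
    rw [neg_inf, sup_inf_right]
    apply le_inf
    · rw [← sup_assoc, hf.2, top_sup_eq]
    · rw [sup_comm (neg f) (neg g), ← sup_assoc, hg.2, top_sup_eq]

lemma isB_sup (hf : IsB f) (hg : IsB g) : IsB (f ⊔ g) := by
  have h := isB_inf (isB_neg hf) (isB_neg hg)
  have e : f ⊔ g = neg (neg f ⊓ neg g) := by rw [neg_inf, TMA.neg_neg, TMA.neg_neg]
  rw [e]; exact isB_neg h

lemma bsplit (hf : IsB f) (z : A) : z = (z ⊓ f) ⊔ (z ⊓ neg f) := by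
  rw [← inf_sup_left, hf.2, inf_top_eq]

lemma le_cases (hf : IsB f) (h1 : z ⊓ f ≤ t) (h2 : z ⊓ neg f ≤ t) : z ≤ t :=
  le_of_eq_of_le (bsplit hf z) (sup_le h1 h2)

-- T1 : Boolean below a is below box a
lemma boolLeBox (hf : IsB f) (h : f ≤ a) : f ≤ box a := by
  apply le_cases (isB_box a) inf_le_right
  have h1 : f ⊓ neg (box a) ≤ a ⊓ neg (box a) := inf_le_inf_right _ h
  have h2 : a ⊓ neg (box a) = a ⊓ neg a := by rw [inf_comm, neg_box_inf, inf_comm]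
  have h3 : f ⊓ (a ⊓ neg a) ≤ f ⊓ neg f :=
    inf_le_inf le_rfl (le_trans inf_le_right (neg_le_neg h))
  calc f ⊓ neg (box a) = f ⊓ (f ⊓ neg (box a)) := by rw [← inf_assoc, inf_idem]
    _ ≤ f ⊓ (a ⊓ neg a) := inf_le_inf le_rfl (le_of_le_of_eq h1 h2)
    _ ≤ f ⊓ neg f := h3
    _ = ⊥ := hf.1
    _ ≤ box a := bot_le

lemma box_mono (h : a ≤ b) : box a ≤ box b :=
  boolLeBox (isB_box a) ((box_le a).trans h)

lemma box_inf (a b : A) : box (a ⊓ b) = box a ⊓ box b :=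
  le_antisymm (le_inf (box_mono inf_le_left) (box_mono inf_le_right))
    (boolLeBox (isB_inf (isB_box a) (isB_box b)) (inf_le_inf (box_le a) (box_le b)))

lemma box_of_isB (hf : IsB f) : box f = f := le_antisymm (box_le f) (boolLeBox hf le_rfl)

lemma box_top : box (⊤ : A) = ⊤ := box_of_isB isB_top
lemma box_bot : box (⊥ : A) = ⊥ := box_of_isB isB_bot

-- T2 : box (f ⊔ a) = f ⊔ box a for Boolean f
lemma box_sup_bool (hf : IsB f) (a : A) : box (f ⊔ a) = f ⊔ box a := by
  apply le_antisymm
  · apply le_cases hf (le_trans inf_le_right le_sup_left)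
    have hg : IsB (box (f ⊔ a) ⊓ neg f) := isB_inf (isB_box _) (isB_neg hf)
    have hga : box (f ⊔ a) ⊓ neg f ≤ a := by
      calc box (f ⊔ a) ⊓ neg f ≤ (f ⊔ a) ⊓ neg f := inf_le_inf_right _ (box_le _)
        _ = (f ⊓ neg f) ⊔ (a ⊓ neg f) := inf_sup_right _ _ _
        _ ≤ ⊥ ⊔ a := sup_le_sup (le_of_eq hf.1) inf_le_left
        _ = a := bot_sup_eq a
    exact le_trans (boolLeBox hg hga) le_sup_right
  · exact sup_le (boolLeBox hf le_sup_left) (box_mono le_sup_right)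

lemma box_inf_boxneg (a : A) : box a ⊓ box (neg a) ≤ ⊥ := by
  calc box a ⊓ box (neg a) ≤ box a ⊓ neg a := inf_le_inf le_rfl (box_le _)
    _ = ⊥ := box_inf_neg a

-- K : box (a ⊔ ¬a) = box a ⊔ box ¬a
lemma box_sup_neg_self (a : A) : box (a ⊔ neg a) = box a ⊔ box (neg a) := by
  set e := box a ⊔ box (neg a) with he
  have hBe : IsB e := isB_sup (isB_box a) (isB_box (neg a))
  apply le_antisymm
  · apply le_cases hBe inf_le_right
    set g := box (a ⊔ neg a) ⊓ neg e with hg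
    have hBg : IsB g := isB_inf (isB_box _) (isB_neg hBe)
    have decomp : a ⊔ neg a = e ⊔ (a ⊓ neg a) := by
      have l1 := Lx a
      have l2 := Lx (neg a)
      rw [TMA.neg_neg, inf_comm (neg a) a] at l2
      calc a ⊔ neg a = (box a ⊔ (a ⊓ neg a)) ⊔ (box (neg a) ⊔ (a ⊓ neg a)) := by rw [l1, l2]
        _ = e ⊔ (a ⊓ neg a) := by rw [sup_sup_sup_comm, sup_idem]
    have hga : g ≤ a ⊓ neg a := by
      have h1 : g ≤ e ⊔ (a ⊓ neg a) := le_trans (le_trans inf_le_left (box_le _)) (le_of_eq decomp)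
      have h2 : g ⊓ e ≤ ⊥ := by
        calc g ⊓ e ≤ neg e ⊓ e := inf_le_inf_right _ inf_le_right
          _ = ⊥ := by rw [inf_comm]; exact hBe.1
      calc g = g ⊓ (e ⊔ (a ⊓ neg a)) := (inf_eq_left.mpr h1).symm
        _ = (g ⊓ e) ⊔ (g ⊓ (a ⊓ neg a)) := inf_sup_left _ _ _
        _ ≤ ⊥ ⊔ (a ⊓ neg a) := sup_le_sup h2 inf_le_right
        _ = a ⊓ neg a := bot_sup_eq _
    have hgbox : g ≤ box a := boolLeBox hBg (hga.trans inf_le_left)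
    have : g ≤ ⊥ := by
      calc g = g ⊓ g := (inf_idem g).symm
        _ ≤ box a ⊓ neg e := inf_le_inf hgbox inf_le_right
        _ ≤ e ⊓ neg e := inf_le_inf_right _ le_sup_left
        _ = ⊥ := hBe.1
    exact this.trans bot_le
  · exact sup_le (box_mono le_sup_left) (box_mono le_sup_right)

lemma cimp_eq (a b : A) : cimp a b =
    (neg (box a) ⊔ b) ⊓ (neg (box (neg b)) ⊔ neg a) ⊓
      (neg (box (neg a ⊔ b)) ⊔ (box (neg a) ⊔ b)) := rfl

lemma neg_le_negbox (a : A) : neg a ≤ neg (box a) := neg_le_neg (box_le a)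

lemma le_negbox_neg (b : A) : b ≤ neg (box (neg b)) := by
  have := neg_le_neg (box_le (neg b)); rwa [TMA.neg_neg] at this

lemma le_cimp_self (a b : A) : b ≤ cimp a b := by
  rw [cimp_eq]
  exact le_inf (le_inf le_sup_right (le_trans (le_negbox_neg b) le_sup_left))
    (le_trans (le_sup_right : b ≤ box (neg a) ⊔ b) le_sup_right)

-- part (i)
lemma cimp_bot_bot : cimp (⊥ : A) ⊥ = ⊤ := by
  rw [cimp_eq]
  simp [neg_bot, neg_top, box_bot, box_top]

-- part (ii)
lemma cimp_bot (x : A) : cimp x ⊥ = neg x := by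
  rw [cimp_eq]
  rw [neg_bot, box_top, neg_top, bot_sup_eq, sup_bot_eq, sup_bot_eq, sup_bot_eq]
  rw [sup_comm (neg (box (neg x))) (box (neg x)), boxB2, inf_top_eq]
  exact inf_eq_right.mpr (neg_le_negbox x)

-- part (v)
lemma box_eq_neg_cimp (x : A) : box x = neg (cimp x (neg x)) := by
  rw [cimp_eq, TMA.neg_neg, sup_idem, inf_idem]
  rw [← sup_assoc, sup_comm (neg (box (neg x))) (box (neg x)), boxB2, top_sup_eq, inf_top_eq]
  rw [TMA.neg_sup, TMA.neg_neg, TMA.neg_neg]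
  exact (inf_eq_left.mpr (box_le x)).symm

lemma negnb_le_cimp (a b : A) : neg a ⊓ neg b ≤ cimp a b := by
  rw [cimp_eq]
  refine le_inf (le_inf ?_ ?_) ?_
  · exact le_trans inf_le_left (le_trans (neg_le_negbox a) le_sup_left)
  · exact le_trans inf_le_left le_sup_right
  · -- need: neg a ⊓ neg b ≤ neg m ⊔ (q ⊔ b)  where m = box (neg a ⊔ b), q = box (neg a)
    apply le_cases (isB_box (neg a ⊔ b)) _ (le_trans inf_le_right le_sup_left)
    -- t := (neg a ⊓ neg b) ⊓ m ≤ q  (≤ q ⊔ b ≤ sup)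
    have hL : box (neg a) ⊔ (neg a ⊓ a) = neg a := by
      have := Lx (neg a); rwa [TMA.neg_neg] at this
    have ht : neg a ⊓ neg b ⊓ box (neg a ⊔ b) ≤ box (neg a) := by
      have h1 : neg a ⊓ neg b ⊓ box (neg a ⊔ b) ≤ neg a := le_trans inf_le_left inf_le_left
      have h2 : neg a ⊓ neg b ⊓ box (neg a ⊔ b) ⊓ (neg a ⊓ a) ≤ ⊥ := by
        have e1 : neg (neg a ⊔ b) = a ⊓ neg b := by rw [TMA.neg_sup, TMA.neg_neg]
        have hm : neg a ⊓ neg b ⊓ box (neg a ⊔ b) ⊓ (neg a ⊓ a) ≤ box (neg a ⊔ b) :=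
          le_trans inf_le_left inf_le_right
        have ha : neg a ⊓ neg b ⊓ box (neg a ⊔ b) ⊓ (neg a ⊓ a) ≤ a :=
          le_trans inf_le_right inf_le_right
        have hb : neg a ⊓ neg b ⊓ box (neg a ⊔ b) ⊓ (neg a ⊓ a) ≤ neg b :=
          le_trans inf_le_left (le_trans inf_le_left inf_le_right)
        calc neg a ⊓ neg b ⊓ box (neg a ⊔ b) ⊓ (neg a ⊓ a)
            ≤ box (neg a ⊔ b) ⊓ (a ⊓ neg b) := le_inf hm (le_inf ha hb)
          _ = box (neg a ⊔ b) ⊓ neg (neg a ⊔ b) := by rw [e1]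
          _ = ⊥ := box_inf_neg _
      calc neg a ⊓ neg b ⊓ box (neg a ⊔ b)
          = neg a ⊓ neg b ⊓ box (neg a ⊔ b) ⊓ neg a := by
            rw [inf_eq_left.mpr h1]  -- ??? wrong lemma direction
        _ = neg a ⊓ neg b ⊓ box (neg a ⊔ b) ⊓ (box (neg a) ⊔ (neg a ⊓ a)) := by rw [hL]
        _ = (neg a ⊓ neg b ⊓ box (neg a ⊔ b) ⊓ box (neg a)) ⊔
              (neg a ⊓ neg b ⊓ box (neg a ⊔ b) ⊓ (neg a ⊓ a)) := inf_sup_left _ _ _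
        _ ≤ box (neg a) ⊔ ⊥ := sup_le_sup inf_le_right h2
        _ = box (neg a) := sup_bot_eq _
    exact le_trans ht (le_trans le_sup_left le_sup_right)

lemma inf_absorb {z f : A} (h : z ≤ f) : z = z ⊓ f := (inf_eq_left.mpr h).symm

lemma cimp_le_f1 (a b : A) : cimp a b ≤ neg (box a) ⊔ b := by
  rw [cimp_eq]; exact le_trans inf_le_left inf_le_left
lemma cimp_le_f2 (a b : A) : cimp a b ≤ neg (box (neg b)) ⊔ neg a := by
  rw [cimp_eq]; exact le_trans inf_le_left inf_le_right
lemma cimp_le_f3 (a b : A) : cimp a b ≤ neg (box (neg a ⊔ b)) ⊔ (box (neg a) ⊔ b) := by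
  rw [cimp_eq]; exact inf_le_right

lemma neg_cimp (a b : A) : neg (cimp a b) =
    (box a ⊓ neg b) ⊔ ((box (neg b) ⊓ a) ⊔
      (box (neg a ⊔ b) ⊓ (neg (box (neg a)) ⊓ neg b))) := by
  rw [cimp_eq]
  simp only [neg_inf, TMA.neg_sup, TMA.neg_neg]
  rw [sup_assoc]

lemma cnc_le (a b : A) : cimp a b ⊓ neg (cimp a b) ≤ b ⊔ (neg a ⊓ neg b) := by
  rw [neg_cimp, inf_sup_left, inf_sup_left]
  refine sup_le ?_ (sup_le ?_ ?_)
  · have h1 : neg (box a) ⊓ (box a ⊓ neg b) ≤ ⊥ := by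
      calc neg (box a) ⊓ (box a ⊓ neg b) ≤ neg (box a) ⊓ box a := inf_le_inf_left _ inf_le_left
        _ = ⊥ := by rw [inf_comm]; exact boxB1 a
    calc cimp a b ⊓ (box a ⊓ neg b)
        ≤ (neg (box a) ⊔ b) ⊓ (box a ⊓ neg b) := inf_le_inf_right _ (cimp_le_f1 a b)
      _ = (neg (box a) ⊓ (box a ⊓ neg b)) ⊔ (b ⊓ (box a ⊓ neg b)) := inf_sup_right _ _ _
      _ ≤ ⊥ ⊔ b := sup_le_sup h1 inf_le_left
      _ = b := bot_sup_eq b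
      _ ≤ b ⊔ (neg a ⊓ neg b) := le_sup_left
  · have h1 : neg (box (neg b)) ⊓ (box (neg b) ⊓ a) ≤ ⊥ := by
      calc neg (box (neg b)) ⊓ (box (neg b) ⊓ a)
          ≤ neg (box (neg b)) ⊓ box (neg b) := inf_le_inf_left _ inf_le_left
        _ = ⊥ := by rw [inf_comm]; exact boxB1 (neg b)
    have h2 : neg a ⊓ (box (neg b) ⊓ a) ≤ neg a ⊓ neg b :=
      inf_le_inf le_rfl (le_trans inf_le_left (box_le (neg b)))
    calc cimp a b ⊓ (box (neg b) ⊓ a)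
        ≤ (neg (box (neg b)) ⊔ neg a) ⊓ (box (neg b) ⊓ a) := inf_le_inf_right _ (cimp_le_f2 a b)
      _ = (neg (box (neg b)) ⊓ (box (neg b) ⊓ a)) ⊔ (neg a ⊓ (box (neg b) ⊓ a)) := inf_sup_right _ _ _
      _ ≤ ⊥ ⊔ (neg a ⊓ neg b) := sup_le_sup h1 h2
      _ = neg a ⊓ neg b := bot_sup_eq _
      _ ≤ b ⊔ (neg a ⊓ neg b) := le_sup_right
  · set X := box (neg a ⊔ b) ⊓ (neg (box (neg a)) ⊓ neg b) with hX
    have h1 : neg (box (neg a ⊔ b)) ⊓ X ≤ ⊥ := by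
      calc neg (box (neg a ⊔ b)) ⊓ X ≤ neg (box (neg a ⊔ b)) ⊓ box (neg a ⊔ b) :=
            inf_le_inf_left _ inf_le_left
        _ = ⊥ := by rw [inf_comm]; exact boxB1 _
    have h2 : box (neg a) ⊓ X ≤ ⊥ := by
      calc box (neg a) ⊓ X ≤ box (neg a) ⊓ neg (box (neg a)) :=
            inf_le_inf_left _ (le_trans inf_le_right inf_le_left)
        _ = ⊥ := boxB1 (neg a)
    calc cimp a b ⊓ X
        ≤ (neg (box (neg a ⊔ b)) ⊔ (box (neg a) ⊔ b)) ⊓ X := inf_le_inf_right _ (cimp_le_f3 a b)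
      _ = (neg (box (neg a ⊔ b)) ⊓ X) ⊔ ((box (neg a) ⊓ X) ⊔ (b ⊓ X)) := by
          rw [inf_sup_right, inf_sup_right]
      _ ≤ ⊥ ⊔ (⊥ ⊔ b) := sup_le_sup h1 (sup_le_sup h2 inf_le_left)
      _ = b := by rw [bot_sup_eq, bot_sup_eq]
      _ ≤ b ⊔ (neg a ⊓ neg b) := le_sup_left

-- the closed form
lemma cf (a b : A) : cimp a b = box (cimp a b) ⊔ (b ⊔ (neg a ⊓ neg b)) := by
  apply le_antisymm
  · calc cimp a b = box (cimp a b) ⊔ (cimp a b ⊓ neg (cimp a b)) := (Lx _).symm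
      _ ≤ box (cimp a b) ⊔ (b ⊔ (neg a ⊓ neg b)) := sup_le_sup_left (cnc_le a b) _
  · exact sup_le (box_le _) (sup_le (le_cimp_self a b) (negnb_le_cimp a b))

lemma box_cimp (a b : A) : box (cimp a b) =
    (neg (box a) ⊔ box b) ⊓ (neg (box (neg b)) ⊔ box (neg a)) ⊓
      ((neg (box (neg a ⊔ b)) ⊔ box (neg a)) ⊔ box b) := by
  rw [cimp_eq, box_inf, box_inf]
  rw [box_sup_bool (isB_neg (isB_box a)) b, box_sup_bool (isB_neg (isB_box (neg b))) (neg a)]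
  rw [← sup_assoc, box_sup_bool (isB_sup (isB_neg (isB_box _)) (isB_box _)) b]

lemma box_cimp_inf_le (x y : A) : box (cimp x y) ⊓ x ≤ y := by
  set e := box (cimp x y) with he
  have hf1 : e ≤ neg (box x) ⊔ box y := by
    rw [he, box_cimp]; exact le_trans inf_le_left inf_le_left
  have hf2 : e ≤ neg (box (neg y)) ⊔ box (neg x) := by
    rw [he, box_cimp]; exact le_trans inf_le_left inf_le_right
  have hf3 : e ≤ (neg (box (neg x ⊔ y)) ⊔ box (neg x)) ⊔ box y := by
    rw [he, box_cimp]; exact inf_le_right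
  set u := e ⊓ (x ⊓ neg x) with hu
  -- u ⊓ box(neg x) = ⊥-ish
  have hqx : box (neg x) ⊓ x = ⊥ := by
    have := box_inf_neg (neg x); rwa [TMA.neg_neg] at this
  have huq : u ⊓ box (neg x) ≤ ⊥ := by
    calc u ⊓ box (neg x) ≤ x ⊓ box (neg x) :=
          inf_le_inf_right _ (le_trans inf_le_right inf_le_left)
      _ = ⊥ := by rw [inf_comm]; exact hqx
  -- u ⊓ neg (box (neg x)) ≤ neg (box (neg y))
  have hu's : u ⊓ neg (box (neg x)) ≤ neg (box (neg y)) := by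
    have h1 : u ⊓ neg (box (neg x)) ≤ (neg (box (neg y)) ⊔ box (neg x)) ⊓ neg (box (neg x)) :=
      inf_le_inf_right _ (le_trans inf_le_left hf2)
    have h2 : box (neg x) ⊓ neg (box (neg x)) = ⊥ := boxB1 (neg x)
    calc u ⊓ neg (box (neg x))
        ≤ (neg (box (neg y)) ⊔ box (neg x)) ⊓ neg (box (neg x)) := h1
      _ = (neg (box (neg y)) ⊓ neg (box (neg x))) ⊔ (box (neg x) ⊓ neg (box (neg x))) :=
          inf_sup_right _ _ _
      _ ≤ neg (box (neg y)) ⊔ ⊥ := sup_le_sup inf_le_left (le_of_eq h2)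
      _ = neg (box (neg y)) := sup_bot_eq _
  -- neg m ⊓ neg x ≤ neg y
  have hmx : neg (box (neg x ⊔ y)) ⊓ neg x ≤ neg y := by
    have hM := neg_box_inf (neg x ⊔ y)
    rw [TMA.neg_sup, TMA.neg_neg] at hM
    calc neg (box (neg x ⊔ y)) ⊓ neg x
        ≤ neg (box (neg x ⊔ y)) ⊓ (neg x ⊔ y) := inf_le_inf_left _ le_sup_left
      _ = x ⊓ neg y ⊓ (neg x ⊔ y) := hM
      _ ≤ neg y := le_trans inf_le_left inf_le_right
  -- neg (box (neg y)) ⊓ neg y ≤ y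
  have hsy : neg (box (neg y)) ⊓ neg y ≤ y := by
    have := neg_box_inf (neg y); rw [TMA.neg_neg] at this
    exact le_of_eq_of_le this inf_le_left
  -- u ⊓ neg (box (neg x)) ≤ y
  have hu'y : u ⊓ neg (box (neg x)) ≤ y := by
    set u' := u ⊓ neg (box (neg x)) with hu'
    have h3 : u' ≤ (neg (box (neg x ⊔ y)) ⊔ box (neg x)) ⊔ box y :=
      le_trans (inf_le_left.trans inf_le_left) hf3
    have hm : u' ⊓ neg (box (neg x ⊔ y)) ≤ y := by
      have a1 : u' ⊓ neg (box (neg x ⊔ y)) ≤ neg y := by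
        calc u' ⊓ neg (box (neg x ⊔ y)) ≤ neg x ⊓ neg (box (neg x ⊔ y)) :=
              inf_le_inf_right _ (inf_le_left.trans (inf_le_right.trans inf_le_right))
          _ ≤ neg y := by rw [inf_comm]; exact hmx
      have a2 : u' ⊓ neg (box (neg x ⊔ y)) ≤ neg (box (neg y)) :=
        le_trans inf_le_left hu's
      exact le_trans (le_inf a2 a1) hsy
    have hq : u' ⊓ box (neg x) ≤ y := by
      calc u' ⊓ box (neg x) ≤ neg (box (neg x)) ⊓ box (neg x) :=
            inf_le_inf_right _ inf_le_right
        _ = ⊥ := by rw [inf_comm]; exact boxB1 (neg x)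
        _ ≤ y := bot_le
    have hr : u' ⊓ box y ≤ y := le_trans inf_le_right (box_le y)
    calc u' = u' ⊓ ((neg (box (neg x ⊔ y)) ⊔ box (neg x)) ⊔ box y) := inf_absorb h3
      _ = (u' ⊓ neg (box (neg x ⊔ y)) ⊔ u' ⊓ box (neg x)) ⊔ u' ⊓ box y := by
          rw [inf_sup_left, inf_sup_left]
      _ ≤ y := sup_le (sup_le hm hq) hr
  -- u ≤ y
  have huy : u ≤ y := by
    calc u = (u ⊓ box (neg x)) ⊔ (u ⊓ neg (box (neg x))) := bsplit (isB_box (neg x)) u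
      _ ≤ ⊥ ⊔ y := sup_le_sup huq hu'y
      _ = y := bot_sup_eq y
  -- finish
  have hxn : x ⊓ neg (box x) = x ⊓ neg x := by
    rw [inf_comm, neg_box_inf, inf_comm]
  calc e ⊓ x = (e ⊓ x) ⊓ (neg (box x) ⊔ box y) := inf_absorb (le_trans inf_le_left hf1)
    _ = (e ⊓ (x ⊓ neg (box x))) ⊔ ((e ⊓ x) ⊓ box y) := by rw [inf_sup_left, inf_assoc]
    _ = u ⊔ ((e ⊓ x) ⊓ box y) := by rw [hxn, hu]
    _ ≤ y ⊔ y := sup_le_sup huy (le_trans inf_le_right (box_le y))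
    _ = y := sup_idem y

lemma sup_eq_cimp_cimp (x y : A) : x ⊔ y = cimp (cimp x y) y := by
  set c := cimp x y with hc
  set e := box c with he
  set r := box y with hr
  set s := box (neg y) with hs
  set w := box (x ⊔ y) with hw
  have hBe : IsB e := isB_box c
  have hBr : IsB r := isB_box y
  have hBs : IsB s := isB_box (neg y)
  have hBw : IsB w := isB_box (x ⊔ y)
  have hcf : c = e ⊔ (y ⊔ (neg x ⊓ neg y)) := cf x y
  have hnc : neg c = neg e ⊓ (neg y ⊓ (x ⊔ y)) := by
    rw [hcf, TMA.neg_sup, TMA.neg_sup, neg_inf, TMA.neg_neg, TMA.neg_neg]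
  have hD : e ⊓ x ≤ y := box_cimp_inf_le x y
  have hDxy : e ⊓ (x ⊔ y) ≤ y := by
    rw [inf_sup_left]; exact sup_le hD inf_le_right
  have rel1 : r ≤ w := box_mono le_sup_right
  have rel2 : r ⊓ s ≤ ⊥ := box_inf_boxneg y
  have rel3 : e ⊓ w ≤ r :=
    boolLeBox (isB_inf hBe hBw)
      (le_trans (inf_le_inf le_rfl (box_le _)) hDxy)
  have hbnc : box (neg c) = neg e ⊓ (s ⊓ w) := by
    rw [hnc, box_inf, box_inf, box_of_isB (isB_neg hBe)]
  have hyxy : y ⊔ (x ⊔ y) = x ⊔ y := by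
    rw [sup_comm x y, ← sup_assoc, sup_idem, sup_comm]
  have hncy : neg c ⊔ y = (neg e ⊔ y) ⊓ ((y ⊔ neg y) ⊓ (x ⊔ y)) := by
    rw [sup_comm (neg c) y, hnc, sup_inf_left, sup_inf_left, hyxy, sup_comm y (neg e)]
  have hbncy : box (neg c ⊔ y) = (neg e ⊔ r) ⊓ ((r ⊔ s) ⊓ w) := by
    rw [hncy, box_inf, box_inf, box_sup_bool (isB_neg hBe) y, box_sup_neg_self y]
  have hnbncy : neg (box (neg c ⊔ y)) = (e ⊓ neg r) ⊔ ((neg r ⊓ neg s) ⊔ neg w) := by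
    rw [hbncy]
    simp only [neg_inf, TMA.neg_sup, TMA.neg_neg]
  -- w ≤ cimp c y
  have hwS : w ≤ cimp c y := by
    rw [cimp_eq]
    refine le_inf (le_inf ?_ ?_) ?_
    · -- w ≤ neg (box c) ⊔ y
      rw [← he]
      exact le_cases hBe (le_trans (le_trans (by rw [inf_comm]) rel3) ((box_le y).trans le_sup_right))
        (le_trans inf_le_right le_sup_left)
    · -- w ≤ neg (box (neg y)) ⊔ neg c
      rw [← hs]
      refine le_cases hBs ?_ (le_trans inf_le_right le_sup_left)
      -- w ⊓ s ≤ neg c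
      have h1 : w ⊓ s ≤ neg e := by
        refine le_cases hBe ?_ inf_le_right
        calc w ⊓ s ⊓ e ≤ (e ⊓ w) ⊓ s := by
              rw [inf_comm (w ⊓ s) e, ← inf_assoc]
          _ ≤ r ⊓ s := inf_le_inf_right _ rel3
          _ ≤ ⊥ := rel2
          _ ≤ neg e := bot_le
      have h2 : w ⊓ s ≤ neg y := le_trans inf_le_right (box_le _)
      have h3 : w ⊓ s ≤ x ⊔ y := le_trans inf_le_left (box_le _)
      exact le_trans (le_inf h1 (le_inf h2 h3)) (le_of_eq hnc.symm) |>.trans le_sup_right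
    · -- w ≤ neg (box (neg c ⊔ y)) ⊔ (box (neg c) ⊔ y)
      rw [hnbncy, hbnc]
      refine le_cases hBe ?_ ?_
      · -- w ⊓ e ≤ _ : w ⊓ e ≤ r ≤ y
        have : w ⊓ e ≤ y := le_trans (le_trans (by rw [inf_comm]) rel3) (box_le y)
        exact le_trans this (le_sup_right.trans le_sup_right)
      · refine le_cases hBs ?_ ?_
        · -- w ⊓ neg e ⊓ s ≤ neg e ⊓ (s ⊓ w)
          have : w ⊓ neg e ⊓ s ≤ neg e ⊓ (s ⊓ w) :=
            le_inf (inf_le_left.trans inf_le_right)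
              (le_inf inf_le_right (inf_le_left.trans inf_le_left))
          exact le_trans this (le_sup_left.trans le_sup_right)
        · refine le_cases hBr ?_ ?_
          · -- ⊓ r ≤ y
            exact le_trans (inf_le_right.trans (box_le y)) (le_sup_right.trans le_sup_right)
          · -- ⊓ neg r ≤ neg r ⊓ neg s
            have : w ⊓ neg e ⊓ neg s ⊓ neg r ≤ neg r ⊓ neg s :=
              le_inf inf_le_right (inf_le_left.trans inf_le_right)
            exact le_trans this (le_trans le_sup_left (le_sup_right.trans le_sup_left))
  set S := cimp c y with hS
  set E := box S with hE
  have hncny : neg c ⊓ neg y = neg c :=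
    inf_eq_left.mpr (by rw [hnc]; exact inf_le_right.trans inf_le_left)
  have hScf : S = E ⊔ (y ⊔ neg c) := by
    have := cf c y
    rwa [hncny] at this
  -- E bounds
  have hE1 : E ≤ neg e ⊔ r := by
    have h1 : S ≤ neg e ⊔ y := by
      have := cimp_le_f1 c y; rwa [← he] at this
    calc E ≤ box (neg e ⊔ y) := box_mono h1
      _ = neg e ⊔ r := box_sup_bool (isB_neg hBe) y
  have hE2 : E ≤ neg s ⊔ (neg e ⊓ (s ⊓ w)) := by
    have h1 : S ≤ neg s ⊔ neg c := by
      have := cimp_le_f2 c y; rwa [← hs] at this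
    calc E ≤ box (neg s ⊔ neg c) := box_mono h1
      _ = neg s ⊔ box (neg c) := box_sup_bool (isB_neg hBs) (neg c)
      _ = neg s ⊔ (neg e ⊓ (s ⊓ w)) := by rw [hbnc]
  -- rel4 : neg s ⊓ neg w ≤ e
  have rel4 : neg s ⊓ neg w ≤ e := by
    rw [he, hc, box_cimp]
    rw [← hr, ← hs]
    refine le_inf (le_inf ?_ ?_) ?_
    · -- ≤ neg (box x) ⊔ r
      have : neg w ≤ neg (box x) := neg_le_neg (box_mono le_sup_left)
      exact le_trans inf_le_right (this.trans le_sup_left)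
    · exact inf_le_left.trans le_sup_left
    · -- ≤ (neg (box (neg x ⊔ y)) ⊔ box (neg x)) ⊔ r
      refine le_cases (isB_box (neg x ⊔ y)) ?_
        (inf_le_right.trans (le_sup_left.trans le_sup_left))
      refine le_cases (isB_box (neg x)) (inf_le_right.trans (le_sup_right.trans le_sup_left)) ?_
      refine le_cases (isB_box y) ?_ ?_
      · rw [← hr]; exact inf_le_right.trans le_sup_right
      · -- g := neg s ⊓ neg w ⊓ m ⊓ neg q ⊓ neg r ≤ ⊥
        set g := neg s ⊓ neg w ⊓ box (neg x ⊔ y) ⊓ neg (box (neg x)) ⊓ neg (box y) with hg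
        have hBg : IsB g :=
          isB_inf (isB_inf (isB_inf (isB_inf (isB_neg hBs) (isB_neg hBw)) (isB_box _))
            (isB_neg (isB_box _))) (isB_neg (isB_box _))
        have hLnx : box (neg x) ⊔ (neg x ⊓ x) = neg x := by
          have := Lx (neg x); rwa [TMA.neg_neg] at this
        have hLy : box y ⊔ (y ⊓ neg y) = y := Lx y
        have hgm : g ≤ (box (neg x) ⊔ (neg x ⊓ x)) ⊔ (box y ⊔ (y ⊓ neg y)) := by
          rw [hLnx, hLy]
          exact le_trans (inf_le_left.trans (inf_le_left.trans inf_le_right)) (box_le _)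
        have hgq : g ⊓ box (neg x) ≤ ⊥ := by
          calc g ⊓ box (neg x) ≤ neg (box (neg x)) ⊓ box (neg x) :=
                inf_le_inf_right _ (inf_le_left.trans inf_le_right)
            _ = ⊥ := by rw [inf_comm]; exact boxB1 _
        have hgr : g ⊓ box y ≤ ⊥ := by
          calc g ⊓ box y ≤ neg (box y) ⊓ box y := inf_le_inf_right _ inf_le_right
            _ = ⊥ := by rw [inf_comm]; exact boxB1 _
        have hgxy : g ≤ x ⊔ y := by
          have step : g ≤ (neg x ⊓ x) ⊔ (y ⊓ neg y) := by
            calc g = g ⊓ ((box (neg x) ⊔ (neg x ⊓ x)) ⊔ (box y ⊔ (y ⊓ neg y))) := inf_absorb hgm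
              _ = ((g ⊓ box (neg x)) ⊔ (g ⊓ (neg x ⊓ x))) ⊔
                    ((g ⊓ box y) ⊔ (g ⊓ (y ⊓ neg y))) := by
                  rw [inf_sup_left, inf_sup_left, inf_sup_left]
              _ ≤ (⊥ ⊔ (neg x ⊓ x)) ⊔ (⊥ ⊔ (y ⊓ neg y)) :=
                  sup_le_sup (sup_le_sup hgq inf_le_right) (sup_le_sup hgr inf_le_right)
              _ = (neg x ⊓ x) ⊔ (y ⊓ neg y) := by rw [bot_sup_eq, bot_sup_eq]
          exact step.trans (sup_le_sup inf_le_right inf_le_left)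
        have hgw : g ≤ w := boolLeBox hBg hgxy
        have : g ≤ ⊥ := by
          calc g = g ⊓ g := (inf_idem g).symm
            _ ≤ w ⊓ neg w := inf_le_inf hgw
                (inf_le_left.trans (inf_le_left.trans (inf_le_left.trans inf_le_right)))
            _ = ⊥ := hBw.1
        exact this.trans bot_le
  -- E = w
  have hEw : E = w := by
    apply le_antisymm
    · have h1 : E ⊓ neg w ≤ neg e := by
        refine le_cases hBr ?_ ?_
        · calc E ⊓ neg w ⊓ r ≤ neg w ⊓ w :=
              le_inf (inf_le_left.trans inf_le_right) (inf_le_right.trans rel1)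
            _ = ⊥ := by rw [inf_comm]; exact hBw.1
            _ ≤ neg e := bot_le
        · calc E ⊓ neg w ⊓ neg r ≤ (neg e ⊔ r) ⊓ neg r :=
              inf_le_inf (inf_le_left.trans hE1) le_rfl
            _ = (neg e ⊓ neg r) ⊔ (r ⊓ neg r) := inf_sup_right _ _ _
            _ ≤ neg e ⊔ ⊥ := sup_le_sup inf_le_left (le_of_eq hBr.1)
            _ = neg e := sup_bot_eq _
      have h2 : E ⊓ neg w ≤ neg s := by
        calc E ⊓ neg w ≤ (neg s ⊔ (neg e ⊓ (s ⊓ w))) ⊓ neg w :=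
              inf_le_inf_right _ hE2
          _ = (neg s ⊓ neg w) ⊔ ((neg e ⊓ (s ⊓ w)) ⊓ neg w) := inf_sup_right _ _ _
          _ ≤ neg s ⊔ ⊥ := by
              refine sup_le_sup inf_le_left ?_
              calc (neg e ⊓ (s ⊓ w)) ⊓ neg w ≤ w ⊓ neg w :=
                  inf_le_inf_right _ (inf_le_right.trans inf_le_right)
                _ = ⊥ := hBw.1
          _ = neg s := sup_bot_eq _
      have h3 : E ⊓ neg w ≤ ⊥ := by
        calc E ⊓ neg w ≤ e ⊓ neg e :=
            le_inf (le_trans (le_inf h2 inf_le_right) rel4) h1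
          _ = ⊥ := hBe.1
      calc E = (E ⊓ w) ⊔ (E ⊓ neg w) := bsplit hBw E
        _ ≤ w ⊔ ⊥ := sup_le_sup inf_le_right h3
        _ = w := sup_bot_eq _
    · exact boolLeBox hBw hwS
  -- conclusion
  apply le_antisymm
  · -- x ⊔ y ≤ S
    have hLxy : w ⊔ ((x ⊔ y) ⊓ (neg x ⊓ neg y)) = x ⊔ y := by
      have := Lx (x ⊔ y)
      rwa [TMA.neg_sup] at this
    have h1 : (x ⊔ y) ⊓ (neg x ⊓ neg y) ≤ S := by
      refine le_cases hBe ?_ ?_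
      · -- ⊓ e ≤ y ≤ S
        have : (x ⊔ y) ⊓ (neg x ⊓ neg y) ⊓ e ≤ y := by
          calc (x ⊔ y) ⊓ (neg x ⊓ neg y) ⊓ e ≤ e ⊓ (x ⊔ y) :=
              le_inf inf_le_right (inf_le_left.trans inf_le_left)
            _ ≤ y := hDxy
        exact this.trans (le_cimp_self c y)
      · -- ⊓ neg e ≤ neg c ≤ S
        have step : (x ⊔ y) ⊓ (neg x ⊓ neg y) ⊓ neg e ≤ neg c := by
          rw [hnc]
          exact le_inf inf_le_right
            (le_inf (inf_le_left.trans (inf_le_right.trans inf_le_right))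
              (inf_le_left.trans inf_le_left))
        have : neg c ≤ S := by
          rw [hScf]; exact le_sup_right.trans le_sup_right
        exact step.trans this
    calc x ⊔ y = w ⊔ ((x ⊔ y) ⊓ (neg x ⊓ neg y)) := hLxy.symm
      _ ≤ S := sup_le hwS h1
  · -- S ≤ x ⊔ y
    rw [hScf, hEw]
    refine sup_le (box_le _) (sup_le le_sup_right ?_)
    rw [hnc]
    exact inf_le_right.trans inf_le_right

end TMAP

/-- In every TMA: `1 = 0 ≻ 0`, `¬x = x ≻ 0`, `x ⊔ y = (x ≻ y) ≻ y`,
`x ⊓ y = ¬(¬x ⊔ ¬y)`, `□x = ¬(x ≻ ¬x)`; hence `≻` and `0` generate all the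
operations of a TMA. -/
theorem stmt6 {A : Type*} [TMA A] (x y : A) :
    (⊤ : A) = TMA.cimp ⊥ ⊥ ∧
    TMA.neg x = TMA.cimp x ⊥ ∧
    x ⊔ y = TMA.cimp (TMA.cimp x y) y ∧
    x ⊓ y = TMA.neg (TMA.neg x ⊔ TMA.neg y) ∧
    TMA.box x = TMA.neg (TMA.cimp x (TMA.neg x)) := by
  refine ⟨TMAP.cimp_bot_bot.symm, (TMAP.cimp_bot x).symm, TMAP.sup_eq_cimp_cimp x y, ?_, TMAP.box_eq_neg_cimp x⟩
  rw [TMA.neg_sup, TMA.neg_neg, TMA.neg_neg]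
end

section
/- Let A be a set with a binary operation ≻ and a constant 0, and define 1 := 0 ≻ 0, ¬x := x ≻ 0, x ∨ y := (x ≻ y) ≻ y, x ∧ y := ¬(¬x ∨ ¬y), and □x := ¬(x ≻ ¬x). Suppose that for all x, y, z in A: (C1) 1 ≻ x = x; (C2) x ≻ 1 = 1; (C3) (x ≻ y) ≻ y = (y ≻ x) ≻ x; (C4) if x ≻ (y ≻ z) = 1 then y ≻ (x ≻ z) = 1; (C5) ((x ≻ (x ≻ y)) ≻ x) ≻ x = 1; (C6) 0 ≻ x = 1; (C7) x ≻ 0 = ¬x; (C8) ((x ∧ y) ≻ z) ≻ ((x ≻ z) ∨ (y ≻ z)) = 1. Then (A, ∧, ∨, 0, 1) is a bounded distributive lattice with bottom 0 and top 1, ¬ satisfies ¬¬x = x and ¬(x ∨ y) = ¬x ∧ ¬y, and □ satisfies □x ∧ ¬x = 0 and ¬□x ∧ x = ¬x ∧ x; that is, the resulting structure is a tetravalent modal algebra. -/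
namespace CTMA
variable {A : Type*}
/-- `1 := 0 ≻ 0`. -/
def one (s : A → A → A) (z : A) : A := s z z
/-- `¬x := x ≻ 0`. -/
def neg (s : A → A → A) (z : A) (x : A) : A := s x z
/-- `x ∨ y := (x ≻ y) ≻ y`. -/
def or (s : A → A → A) (x y : A) : A := s (s x y) y
/-- `x ∧ y := ¬(¬x ∨ ¬y)`. -/
def and (s : A → A → A) (z : A) (x y : A) : A :=
  neg s z (or s (neg s z x) (neg s z y))
/-- `□x := ¬(x ≻ ¬x)`. -/
def box (s : A → A → A) (z : A) (x : A) : A := neg s z (s x (neg s z x))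
end CTMA

namespace CTMAAux

/-- Bundle of the eight axioms. -/
structure Pack {A : Type*} (s : A → A → A) (z : A) : Prop where
  C1 : ∀ x : A, s (CTMA.one s z) x = x
  C2 : ∀ x : A, s x (CTMA.one s z) = CTMA.one s z
  C3 : ∀ x y : A, s (s x y) y = s (s y x) x
  C4 : ∀ x y w : A, s x (s y w) = CTMA.one s z → s y (s x w) = CTMA.one s z
  C5 : ∀ x y : A, s (s (s x (s x y)) x) x = CTMA.one s z
  C6 : ∀ x : A, s z x = CTMA.one s z
  C8 : ∀ x y w : A,
    s (s (CTMA.and s z x y) w) (CTMA.or s (s x w) (s y w)) = CTMA.one s z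

variable {A : Type*} {s : A → A → A} {z : A} (h : Pack s z)

include h

theorem id1 (x : A) : s x x = CTMA.one s z := by
  have h3 := h.C3 x (CTMA.one s z)
  rw [h.C2 x, h.C1 x] at h3
  rw [h.C2 (CTMA.one s z)] at h3
  exact h3.symm

theorem F3 (x y : A) : s x (s y x) = CTMA.one s z :=
  h.C4 y x x (by rw [id1 h x]; exact h.C2 y)

theorem J1 (x y : A) : s x (CTMA.or s x y) = CTMA.one s z :=
  h.C4 (s x y) x y (id1 h (s x y))

theorem le_or_right (x y : A) : s y (CTMA.or s x y) = CTMA.one s z :=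
  F3 h y (s x y)

theorem antisymm {a b : A} (h1 : s a b = CTMA.one s z) (h2 : s b a = CTMA.one s z) :
    a = b := by
  have h3 := h.C3 b a
  rw [h1, h2, h.C1 a, h.C1 b] at h3
  exact h3

theorem ub_eq {y w : A} (h2 : s y w = CTMA.one s z) : s (s w y) y = w := by
  have h3 := h.C3 y w
  rw [h2, h.C1 w] at h3
  exact h3.symm

theorem trans {x y w : A} (h1 : s x y = CTMA.one s z) (h2 : s y w = CTMA.one s z) :
    s x w = CTMA.one s z := by
  rw [← ub_eq h h2]
  exact h.C4 (s w y) x y (by rw [h1]; exact h.C2 (s w y))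

theorem M2 {a b : A} (h1 : s a b = CTMA.one s z) (w : A) :
    s (s b w) (s a w) = CTMA.one s z :=
  h.C4 a (s b w) w (trans h h1 (J1 h b w))

theorem J3 {x y w : A} (h1 : s x w = CTMA.one s z) (h2 : s y w = CTMA.one s z) :
    s (CTMA.or s x y) w = CTMA.one s z := by
  have m2 := M2 h (M2 h h1 y) y
  rw [ub_eq h h2] at m2
  exact m2

theorem or_le {x y w : A} (h1 : s x w = CTMA.one s z) (h2 : s y w = CTMA.one s z) :
    s (CTMA.or s x y) w = CTMA.one s z := J3 h h1 h2

theorem or_mono {a a' b b' : A} (h1 : s a a' = CTMA.one s z)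
    (h2 : s b b' = CTMA.one s z) :
    s (CTMA.or s a b) (CTMA.or s a' b') = CTMA.one s z :=
  or_le h (trans h h1 (J1 h a' b')) (trans h h2 (le_or_right h a' b'))

theorem DN (x : A) : s (s x z) z = x := by
  have h3 := h.C3 x z
  rw [h.C6 x, h.C1 x] at h3
  exact h3

theorem DN' (x : A) : CTMA.neg s z (CTMA.neg s z x) = x := DN h x

theorem eq_one {t : A} (h1 : s (CTMA.one s z) t = CTMA.one s z) :
    t = CTMA.one s z := by
  rw [h.C1 t] at h1
  exact h1

theorem and_le_left (x y : A) : s (CTMA.and s z x y) x = CTMA.one s z := by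
  have j : s (s x z) (CTMA.or s (s x z) (s y z)) = CTMA.one s z := J1 h (s x z) (s y z)
  have t := M2 h j z
  rw [DN h x] at t
  exact t

theorem and_le_right (x y : A) : s (CTMA.and s z x y) y = CTMA.one s z := by
  have j : s (s y z) (CTMA.or s (s x z) (s y z)) = CTMA.one s z :=
    F3 h (s y z) (s (s x z) (s y z))
  have t := M2 h j z
  rw [DN h y] at t
  exact t

theorem le_and {w x y : A} (h1 : s w x = CTMA.one s z) (h2 : s w y = CTMA.one s z) :
    s w (CTMA.and s z x y) = CTMA.one s z := by
  have j : s (CTMA.or s (s x z) (s y z)) (s w z) = CTMA.one s z :=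
    J3 h (M2 h h1 z) (M2 h h2 z)
  have m := M2 h j z
  rw [DN h w] at m
  exact m

theorem E_eq (x y w : A) :
    s (CTMA.and s z x y) w = CTMA.or s (s x w) (s y w) :=
  antisymm h (h.C8 x y w)
    (or_le h (M2 h (and_le_left h x y) w) (M2 h (and_le_right h x y) w))

theorem star (a c : A) : s (CTMA.or s a c) c = s a c :=
  antisymm h (M2 h (J1 h a c) c) (J1 h (s a c) c)

theorem or_eq_right {a b : A} (h1 : s a b = CTMA.one s z) : CTMA.or s a b = b :=
  antisymm h (or_le h h1 (id1 h b)) (le_or_right h a b)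

theorem or_comm' (x y : A) : CTMA.or s x y = CTMA.or s y x := h.C3 x y

theorem dd_ge (x y w : A) :
    s (CTMA.or s x (CTMA.and s z y w))
      (CTMA.and s z (CTMA.or s x y) (CTMA.or s x w)) = CTMA.one s z :=
  le_and h
    (or_le h (J1 h x y) (trans h (and_le_left h y w) (le_or_right h x y)))
    (or_le h (J1 h x w) (trans h (and_le_right h y w) (le_or_right h x w)))

theorem dd_le (x y w : A) :
    s (CTMA.and s z (CTMA.or s x y) (CTMA.or s x w))
      (CTMA.or s x (CTMA.and s z y w)) = CTMA.one s z := by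
  rw [E_eq h (CTMA.or s x y) (CTMA.or s x w) (CTMA.or s x (CTMA.and s z y w))]
  have lyc : s (CTMA.or s x y)
      (CTMA.or s y (CTMA.or s x (CTMA.and s z y w))) = CTMA.one s z :=
    or_le h
      (trans h (J1 h x (CTMA.and s z y w))
        (le_or_right h y (CTMA.or s x (CTMA.and s z y w))))
      (J1 h y (CTMA.or s x (CTMA.and s z y w)))
  have A1 := M2 h lyc (CTMA.or s x (CTMA.and s z y w))
  rw [star h y (CTMA.or s x (CTMA.and s z y w))] at A1
  have lwc : s (CTMA.or s x w)
      (CTMA.or s w (CTMA.or s x (CTMA.and s z y w))) = CTMA.one s z :=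
    or_le h
      (trans h (J1 h x (CTMA.and s z y w))
        (le_or_right h w (CTMA.or s x (CTMA.and s z y w))))
      (J1 h w (CTMA.or s x (CTMA.and s z y w)))
  have B1 := M2 h lwc (CTMA.or s x (CTMA.and s z y w))
  rw [star h w (CTMA.or s x (CTMA.and s z y w))] at B1
  have M := or_mono h A1 B1
  have hone : CTMA.or s (s y (CTMA.or s x (CTMA.and s z y w)))
      (s w (CTMA.or s x (CTMA.and s z y w))) = CTMA.one s z :=
    (E_eq h y w (CTMA.or s x (CTMA.and s z y w))).symm.trans
      (le_or_right h x (CTMA.and s z y w))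
  rw [hone] at M
  exact eq_one h M

theorem dual_dist (x y w : A) :
    CTMA.or s x (CTMA.and s z y w)
      = CTMA.and s z (CTMA.or s x y) (CTMA.or s x w) :=
  antisymm h (dd_ge h x y w) (dd_le h x y w)

theorem and_comm' (x y : A) : CTMA.and s z x y = CTMA.and s z y x :=
  congrArg (fun t => s t z) (h.C3 (s x z) (s y z))

theorem and_assoc' (x y w : A) :
    CTMA.and s z (CTMA.and s z x y) w = CTMA.and s z x (CTMA.and s z y w) :=
  antisymm h
    (le_and h
      (trans h (and_le_left h (CTMA.and s z x y) w) (and_le_left h x y))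
      (le_and h
        (trans h (and_le_left h (CTMA.and s z x y) w) (and_le_right h x y))
        (and_le_right h (CTMA.and s z x y) w)))
    (le_and h
      (le_and h (and_le_left h x (CTMA.and s z y w))
        (trans h (and_le_right h x (CTMA.and s z y w)) (and_le_left h y w)))
      (trans h (and_le_right h x (CTMA.and s z y w)) (and_le_right h y w)))

theorem or_assoc' (x y w : A) :
    CTMA.or s (CTMA.or s x y) w = CTMA.or s x (CTMA.or s y w) :=
  antisymm h
    (or_le h
      (or_le h (J1 h x (CTMA.or s y w))
        (trans h (J1 h y w) (le_or_right h x (CTMA.or s y w))))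
      (trans h (le_or_right h y w) (le_or_right h x (CTMA.or s y w))))
    (or_le h
      (trans h (J1 h x y) (J1 h (CTMA.or s x y) w))
      (or_le h (trans h (le_or_right h x y) (J1 h (CTMA.or s x y) w))
        (le_or_right h (CTMA.or s x y) w)))

theorem distrib' (x y w : A) :
    CTMA.and s z x (CTMA.or s y w)
      = CTMA.or s (CTMA.and s z x y) (CTMA.and s z x w) := by
  have h2 : CTMA.or s (CTMA.and s z x y) x = x := or_eq_right h (and_le_left h x y)
  have h6 : CTMA.and s z x (CTMA.or s w x) = x :=
    antisymm h (and_le_left h x (CTMA.or s w x))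
      (le_and h (id1 h x) (le_or_right h w x))
  have key : CTMA.or s (CTMA.and s z x y) (CTMA.and s z x w)
      = CTMA.and s z x (CTMA.or s y w) := by
    calc CTMA.or s (CTMA.and s z x y) (CTMA.and s z x w)
        = CTMA.and s z (CTMA.or s (CTMA.and s z x y) x)
            (CTMA.or s (CTMA.and s z x y) w) := dual_dist h (CTMA.and s z x y) x w
      _ = CTMA.and s z x (CTMA.or s (CTMA.and s z x y) w) := by rw [h2]
      _ = CTMA.and s z x (CTMA.or s w (CTMA.and s z x y)) := by
            rw [or_comm' h (CTMA.and s z x y) w]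
      _ = CTMA.and s z x (CTMA.and s z (CTMA.or s w x) (CTMA.or s w y)) := by
            rw [dual_dist h w x y]
      _ = CTMA.and s z (CTMA.and s z x (CTMA.or s w x)) (CTMA.or s w y) :=
            (and_assoc' h x (CTMA.or s w x) (CTMA.or s w y)).symm
      _ = CTMA.and s z x (CTMA.or s w y) := by rw [h6]
      _ = CTMA.and s z x (CTMA.or s y w) := by rw [or_comm' h w y]
  exact key.symm

theorem negor (a b : A) :
    CTMA.and s z (CTMA.neg s z a) (CTMA.neg s z b) = CTMA.neg s z (CTMA.or s a b) := by
  show CTMA.neg s z (CTMA.or s (CTMA.neg s z (CTMA.neg s z a))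
      (CTMA.neg s z (CTMA.neg s z b))) = _
  rw [DN' h a, DN' h b]


theorem tma1 (x : A) :
    CTMA.and s z (CTMA.box s z x) (CTMA.neg s z x) = z := by
  have e1 : CTMA.and s z (CTMA.box s z x) (CTMA.neg s z x)
      = CTMA.neg s z (CTMA.or s (s x (CTMA.neg s z x)) x) :=
    negor h (s x (CTMA.neg s z x)) x
  have e2 : CTMA.or s (s x (CTMA.neg s z x)) x = CTMA.one s z := h.C5 x z
  rw [e1, e2]
  exact h.C1 z

theorem tma2 (x : A) :
    CTMA.and s z (CTMA.neg s z (CTMA.box s z x)) x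
      = CTMA.and s z (CTMA.neg s z x) x := by
  have dnm : CTMA.neg s z (CTMA.box s z x) = s x (CTMA.neg s z x) :=
    DN h (s x (CTMA.neg s z x))
  rw [dnm]
  have hv : CTMA.or s x (s x (CTMA.neg s z x)) = CTMA.one s z :=
    (h.C3 x (s x (CTMA.neg s z x))).trans (h.C5 x z)
  have M := or_mono h (J1 h x (CTMA.neg s z x)) (id1 h (s x (CTMA.neg s z x)))
  rw [hv] at M
  have hT : CTMA.or s (s (s x (CTMA.neg s z x)) (CTMA.neg s z x))
      (s x (CTMA.neg s z x)) = CTMA.one s z := eq_one h M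
  have key : s (CTMA.and s z (s x (CTMA.neg s z x)) x) (CTMA.neg s z x)
      = CTMA.one s z :=
    (E_eq h (s x (CTMA.neg s z x)) x (CTMA.neg s z x)).trans hT
  exact antisymm h
    (le_and h key (and_le_right h (s x (CTMA.neg s z x)) x))
    (le_and h
      (trans h (and_le_left h (CTMA.neg s z x) x) (F3 h (CTMA.neg s z x) x))
      (and_le_right h (CTMA.neg s z x) x))

end CTMAAux


/-- If a set with a binary operation `≻` and a constant `0` satisfies (C1)-(C8),
then the derived operations make it a bounded distributive lattice with bottom `0`
and top `1`, on which `¬` is a De Morgan negation and `□` satisfies the two TMA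
axioms; i.e., the resulting structure is a tetravalent modal algebra. -/
theorem stmt8 {A : Type*} (s : A → A → A) (z : A)
    (C1 : ∀ x : A, s (CTMA.one s z) x = x)
    (C2 : ∀ x : A, s x (CTMA.one s z) = CTMA.one s z)
    (C3 : ∀ x y : A, s (s x y) y = s (s y x) x)
    (C4 : ∀ x y w : A, s x (s y w) = CTMA.one s z → s y (s x w) = CTMA.one s z)
    (C5 : ∀ x y : A, s (s (s x (s x y)) x) x = CTMA.one s z)
    (C6 : ∀ x : A, s z x = CTMA.one s z)
    (C7 : ∀ x : A, s x z = CTMA.neg s z x)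
    (C8 : ∀ x y w : A,
      s (s (CTMA.and s z x y) w) (CTMA.or s (s x w) (s y w)) = CTMA.one s z) :
    (∀ x y : A, CTMA.or s x y = CTMA.or s y x) ∧
    (∀ x y w : A, CTMA.or s (CTMA.or s x y) w = CTMA.or s x (CTMA.or s y w)) ∧
    (∀ x y : A, CTMA.and s z x y = CTMA.and s z y x) ∧
    (∀ x y w : A,
      CTMA.and s z (CTMA.and s z x y) w = CTMA.and s z x (CTMA.and s z y w)) ∧
    (∀ x y : A, CTMA.or s x (CTMA.and s z x y) = x) ∧
    (∀ x y : A, CTMA.and s z x (CTMA.or s x y) = x) ∧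
    (∀ x y w : A,
      CTMA.and s z x (CTMA.or s y w)
        = CTMA.or s (CTMA.and s z x y) (CTMA.and s z x w)) ∧
    (∀ x : A, CTMA.or s x z = x) ∧
    (∀ x : A, CTMA.and s z x z = z) ∧
    (∀ x : A, CTMA.and s z x (CTMA.one s z) = x) ∧
    (∀ x : A, CTMA.or s x (CTMA.one s z) = CTMA.one s z) ∧
    (∀ x : A, CTMA.neg s z (CTMA.neg s z x) = x) ∧
    (∀ x y : A,
      CTMA.neg s z (CTMA.or s x y)
        = CTMA.and s z (CTMA.neg s z x) (CTMA.neg s z y)) ∧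
    (∀ x : A, CTMA.and s z (CTMA.box s z x) (CTMA.neg s z x) = z) ∧
    (∀ x : A,
      CTMA.and s z (CTMA.neg s z (CTMA.box s z x)) x
        = CTMA.and s z (CTMA.neg s z x) x) := by
  have h : CTMAAux.Pack s z := ⟨C1, C2, C3, C4, C5, C6, C8⟩
  refine ⟨fun x y => CTMAAux.or_comm' h x y,
    fun x y w => CTMAAux.or_assoc' h x y w,
    fun x y => CTMAAux.and_comm' h x y,
    fun x y w => CTMAAux.and_assoc' h x y w,
    fun x y => CTMAAux.antisymm h
      (CTMAAux.or_le h (CTMAAux.id1 h x) (CTMAAux.and_le_left h x y))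
      (CTMAAux.J1 h x (CTMA.and s z x y)),
    fun x y => CTMAAux.antisymm h (CTMAAux.and_le_left h x (CTMA.or s x y))
      (CTMAAux.le_and h (CTMAAux.id1 h x) (CTMAAux.J1 h x y)),
    fun x y w => CTMAAux.distrib' h x y w,
    fun x => CTMAAux.DN h x,
    fun x => CTMAAux.antisymm h (CTMAAux.and_le_right h x z) (C6 (CTMA.and s z x z)),
    fun x => CTMAAux.antisymm h (CTMAAux.and_le_left h x (CTMA.one s z))
      (CTMAAux.le_and h (CTMAAux.id1 h x) (C2 x)),
    fun x => CTMAAux.antisymm h (C2 (CTMA.or s x (CTMA.one s z)))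
      (CTMAAux.le_or_right h x (CTMA.one s z)),
    fun x => CTMAAux.DN' h x,
    fun x y => (CTMAAux.negor h x y).symm,
    fun x => CTMAAux.tma1 h x,
    fun x => CTMAAux.tma2 h x⟩
end

section
/- In the four-element algebra M4m: (a) for every x, x ≻ (x ≻ □x) = 1, so the modal principle α ≻ (α ≻ □α) is valid in TML (this principle is not valid in classical S5); (b) the contrapositive implication does not satisfy the contraction law: there exist x, y in M4m with x ≻ (x ≻ y) ≠ x ≻ y (for instance x = n, y = 0). -/
/-- (a) The modal principle `α ≻ (α ≻ □α)` is valid in TML; (b) the contrapositive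
implication does not satisfy the contraction law, witnessed by `x = n`, `y = 0`. -/
theorem stmt11 :
    (∀ x : M4, TMA.cimp x (TMA.cimp x (TMA.box x)) = M4.one) ∧
    (∃ x y : M4, TMA.cimp x (TMA.cimp x y) ≠ TMA.cimp x y) ∧
    TMA.cimp M4.n (TMA.cimp M4.n M4.zero) ≠ TMA.cimp M4.n M4.zero := by
  exact ⟨by decide, ⟨M4.n, M4.zero, by decide⟩, by decide⟩
end

section
/- Weak deduction metatheorem for the contrapositive implication: for all formulas α and β, the following are equivalent: (i) for every valuation v into M4m, v(α) ≤ v(β); (ii) for every valuation v into M4m, v(α ≻ β) = 1. That is, α ⊨_TML β iff ⊨_TML α ≻ β. -/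
/-- Formulas of TML in the language `∧, ∨, ≻, ¬, □, ⊥`. -/
inductive Fm2 : Type
  | var : ℕ → Fm2
  | bot : Fm2
  | and : Fm2 → Fm2 → Fm2
  | or : Fm2 → Fm2 → Fm2
  | imp : Fm2 → Fm2 → Fm2
  | not : Fm2 → Fm2
  | box : Fm2 → Fm2

/-- The homomorphic extension of a valuation `v` of the propositional variables
in a TMA `A` to all formulas, interpreting `≻` as the contrapositive implication. -/
def Fm2.val {A : Type*} [TMA A] (v : ℕ → A) : Fm2 → A
  | .var p => v p
  | .bot => ⊥
  | .and α β => Fm2.val v α ⊓ Fm2.val v β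
  | .or α β => Fm2.val v α ⊔ Fm2.val v β
  | .imp α β => TMA.cimp (Fm2.val v α) (Fm2.val v β)
  | .not α => TMA.neg (Fm2.val v α)
  | .box α => TMA.box (Fm2.val v α)

lemma cimp_eq_one_iff_le : ∀ x y : M4, TMA.cimp x y = M4.one ↔ x ≤ y := by decide

/-- Weak deduction metatheorem for the contrapositive implication:
`α ⊨_TML β` iff `⊨_TML α ≻ β`. -/
theorem stmt14 (α β : Fm2) :
    (∀ v : ℕ → M4, Fm2.val v α ≤ Fm2.val v β) ↔
    (∀ v : ℕ → M4, Fm2.val v (Fm2.imp α β) = M4.one) := by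
  constructor
  · intro h v
    exact (cimp_eq_one_iff_le _ _).mpr (h v)
  · intro h v
    exact (cimp_eq_one_iff_le _ _).mp (h v)
end

section
/- The deduction metatheorem for ≻ fails in TML with two premises, direction 1: there exist formulas α, β, γ such that α, β ⊨_TML γ (i.e., for every valuation v into M4m, v(α) ⊓ v(β) ≤ v(γ)) but not α ⊨_TML β ≻ γ (i.e., some valuation v into M4m has v(α) ≰ v(β ≻ γ)). For instance α = •p ∧ •q ∧ •(p ≻ q) ∧ p, β = q, γ = ⊥, where p, q are distinct propositional variables and •δ := ◇(δ ∧ ¬δ) with ◇δ := ¬□¬δ. -/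
/-- The deduction metatheorem for `≻` fails with two premises, direction 1:
there are formulas `α, β, γ` with `α, β ⊨_TML γ` but not `α ⊨_TML β ≻ γ`. -/
theorem stmt15 :
    ∃ α β γ : Fm2,
      (∀ v : ℕ → M4, Fm2.val v α ⊓ Fm2.val v β ≤ Fm2.val v γ) ∧
      ¬(∀ v : ℕ → M4, Fm2.val v α ≤ Fm2.val v (Fm2.imp β γ)) := by
  
  -- bullet •δ := ◇(δ ∧ ¬δ)
  classical
  let p : Fm2 := .var 0
  let q : Fm2 := .var 1
  let bl : Fm2 → Fm2 := fun δ => .not (.box (.not (.and δ (.not δ))))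
  refine ⟨.and (.and (.and (bl p) (bl q)) (bl (.imp p q))) p, q, .bot, ?_, ?_⟩
  · intro v
    show Fm2.val v _ ⊓ Fm2.val v _ ≤ Fm2.val v _
    simp only [Fm2.val, bl, p, q]
    revert v
    exact fun v => (by decide : ∀ x y : M4,
      TMA.neg (TMA.box (TMA.neg (x ⊓ TMA.neg x))) ⊓
        TMA.neg (TMA.box (TMA.neg (y ⊓ TMA.neg y))) ⊓
        TMA.neg (TMA.box (TMA.neg (TMA.cimp x y ⊓ TMA.neg (TMA.cimp x y)))) ⊓ x ⊓ y ≤ ⊥)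
      (v 0) (v 1)
  · intro h
    have := h (fun k => if k = 0 then M4.n else M4.b)
    revert this
    simp only [Fm2.val, bl, p, q]
    decide
end

section
/- The deduction metatheorem for ≻ fails in TML with two premises, direction 2: there exist formulas α, β, γ such that α ⊨_TML β ≻ γ (i.e., for every valuation v into M4m, v(α) ≤ v(β ≻ γ)) but not α, β ⊨_TML γ (i.e., some valuation v into M4m has v(α) ⊓ v(β) ≰ v(γ)). For instance α = p, β = ¬p, γ = ⊥, where p is a propositional variable. -/
/-- The deduction metatheorem for `≻` fails with two premises, direction 2:
there are formulas `α, β, γ` with `α ⊨_TML β ≻ γ` but not `α, β ⊨_TML γ`. -/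
theorem stmt16 :
    ∃ α β γ : Fm2,
      (∀ v : ℕ → M4, Fm2.val v α ≤ Fm2.val v (Fm2.imp β γ)) ∧
      ¬(∀ v : ℕ → M4, Fm2.val v α ⊓ Fm2.val v β ≤ Fm2.val v γ) := by
  refine ⟨.var 0, .not (.var 0), .bot, ?_, ?_⟩
  · intro v
    simp only [Fm2.val]
    exact (by decide : ∀ x : M4, x ≤ TMA.cimp (TMA.neg x) ⊥) (v 0)
  · intro h
    have := h (fun _ => M4.n)
    revert this
    decide
end

section
/- Tautologies of TML only take the value 1: if a formula α satisfies v(α) ∈ {b, 1} for every valuation v into M4m, then v(α) = 1 for every valuation v into M4m. -/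
lemma val_swap (α : Fm) (v : ℕ → M4) :
    Fm.val (fun i => (v i).swap) α = (Fm.val v α).swap := by
  induction α with
  | var p => rfl
  | bot => rfl
  | and a b ha hb =>
      simp only [Fm.val, ha, hb]
      rcases Fm.val v a with ⟨x, y⟩; rcases Fm.val v b with ⟨z, w⟩; rfl
  | or a b ha hb =>
      simp only [Fm.val, ha, hb]
      rcases Fm.val v a with ⟨x, y⟩; rcases Fm.val v b with ⟨z, w⟩; rfl
  | not a ha =>
      simp only [Fm.val, ha]
      rcases Fm.val v a with ⟨x, y⟩; rfl
  | box a ha =>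
      simp only [Fm.val, ha]
      rcases Fm.val v a with ⟨x, y⟩
      rcases x <;> rcases y <;> rfl

/-- Tautologies of TML only take the value `1`: if `v α ∈ {b, 1}` for every
valuation `v` into `M4m`, then `v α = 1` for every valuation `v`. -/
theorem stmt18 (α : Fm)
    (h : ∀ v : ℕ → M4, Fm.val v α = M4.b ∨ Fm.val v α = M4.one) :
    ∀ v : ℕ → M4, Fm.val v α = M4.one := by
  intro v
  rcases h v with hb | h1
  · have := h (fun i => (v i).swap)
    rw [val_swap, hb] at this
    rcases this with h' | h' <;> exact absurd h' (by decide)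
  · exact h1
end
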